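/- For n ≥ 1, the n×n Jacobi matrix F with zero off-diagonal 1's, diagonal entries b₁ = −1 and b_j = 0 for j ≥ 2, has characteristic polynomial det(F + xI) = U_n(x/2) − U_{n-1}(x/2), where U_k denotes the Chebyshev polynomial of the second kind; consequently the eigenvalues of F are {2 cos(2πj/(2n+1)) : j = 1, …, n}. -/

import Mathlib

open Polynomial Real


noncomputable def ocq : ℕ → ℝ[X]
  | 0 => 1
  | 1 => X - 1
  | (k+2) => X * ocq (k+1) - ocq k

lemma ocq_monic_deg : ∀ k, (ocq k).Monic ∧ (ocq k).natDegree = k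
  | 0 => by constructor <;> simp [ocq, monic_one]
  | 1 => by
      refine ⟨by simpa [ocq] using (monic_X_sub_C (1:ℝ)), ?_⟩
      have := natDegree_X_sub_C (1:ℝ)
      simpa [ocq] using this
  | (k+2) => by
      obtain ⟨h1m, h1d⟩ := ocq_monic_deg (k+1)
      obtain ⟨h0m, h0d⟩ := ocq_monic_deg k
      have hXm : (X * ocq (k+1)).Monic := (monic_X).mul h1m
      have hXd : (X * ocq (k+1)).natDegree = k + 2 := by
        rw [natDegree_mul X_ne_zero h1m.ne_zero, natDegree_X, h1d]; ring
      have hlt : (ocq k).degree < (X * ocq (k+1)).degree := by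
        rw [degree_eq_natDegree h0m.ne_zero, degree_eq_natDegree hXm.ne_zero, hXd, h0d]
        exact_mod_cast Nat.lt_succ_of_lt (Nat.lt_succ_self k)
      refine ⟨?_, ?_⟩
      · simpa [ocq, sub_eq_add_neg] using hXm.add_of_left (by simpa using hlt)
      · show (X * ocq (k+1) - ocq k).natDegree = k + 2
        rw [← hXd]
        exact natDegree_sub_eq_left_of_natDegree_lt (by omega)

lemma C_two_poly : (Polynomial.C (2:ℝ)) = 2 := by
  have := Polynomial.C_eq_natCast (R := ℝ) 2
  norm_num at this ⊢
  exact_mod_cast this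

lemma two_mul_w : (2:ℝ[X]) * (C (2⁻¹:ℝ) * X) = X := by
  rw [← C_two_poly, ← mul_assoc, ← C_mul]
  norm_num

lemma ocq_eq_cheb : ∀ k : ℕ, ocq k =
    (Polynomial.Chebyshev.U ℝ k).comp (C (2⁻¹:ℝ) * X) -
    (Polynomial.Chebyshev.U ℝ ((k:ℤ) - 1)).comp (C (2⁻¹:ℝ) * X)
  | 0 => by simp [ocq]
  | 1 => by
      show X - 1 = _
      rw [show ((1:ℕ):ℤ) = 1 by norm_num, show (1:ℤ) - 1 = 0 by ring,
        Polynomial.Chebyshev.U_one, Polynomial.Chebyshev.U_zero]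
      simp only [mul_comp, ofNat_comp, X_comp, one_comp]
      linear_combination -two_mul_w
  | (k+2) => by
      have h1 := ocq_eq_cheb (k+1)
      have h0 := ocq_eq_cheb k
      set w : ℝ[X] := C (2⁻¹:ℝ) * X with hw
      have r2 : Polynomial.Chebyshev.U ℝ ((k:ℤ)+2) = 2 * X * Polynomial.Chebyshev.U ℝ ((k:ℤ)+1) - Polynomial.Chebyshev.U ℝ k :=
        Polynomial.Chebyshev.U_add_two ℝ k
      have r1 : Polynomial.Chebyshev.U ℝ ((k:ℤ)+1) = 2 * X * Polynomial.Chebyshev.U ℝ (k:ℤ) - Polynomial.Chebyshev.U ℝ ((k:ℤ)-1) :=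
        Polynomial.Chebyshev.U_add_one ℝ k
      show X * ocq (k+1) - ocq k = _
      rw [show ((k+2:ℕ):ℤ) = (k:ℤ)+2 by push_cast; ring,
          show ((k:ℤ)+2) - 1 = (k:ℤ)+1 by ring]
      rw [h1, h0, show ((k+1:ℕ):ℤ) - 1 = (k:ℤ) by push_cast; ring,
          show ((k+1:ℕ):ℤ) = (k:ℤ)+1 by push_cast; ring, r2, r1]
      simp only [sub_comp, mul_comp, ofNat_comp, X_comp]
      linear_combination ((Polynomial.Chebyshev.U ℝ (k:ℤ)).comp w
        + (Polynomial.Chebyshev.U ℝ ((k:ℤ)-1)).comp w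
        - 2 * w * (Polynomial.Chebyshev.U ℝ (k:ℤ)).comp w) * two_mul_w

lemma ocq_eval (k : ℕ) (x : ℝ) : (ocq k).eval x =
    (Polynomial.Chebyshev.U ℝ k).eval (x/2) -
    (Polynomial.Chebyshev.U ℝ ((k:ℤ)-1)).eval (x/2) := by
  rw [ocq_eq_cheb k]
  simp only [eval_sub, eval_comp, eval_mul, eval_C, eval_X]
  rw [show (2⁻¹:ℝ) * x = x/2 by ring]

lemma ocq_root (n j : ℕ) (h1 : 1 ≤ j) (h2 : j ≤ n) :
    (ocq n).eval (-(2 * Real.cos (2*Real.pi*(j:ℝ)/(2*(n:ℝ)+1)))) = 0 := by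
  set θ : ℝ := 2*Real.pi*(j:ℝ)/(2*(n:ℝ)+1) with hθ
  have hden : (0:ℝ) < 2*(n:ℝ)+1 := by positivity
  have hj : (1:ℝ) ≤ (j:ℝ) := by exact_mod_cast h1
  have hjn : (j:ℝ) ≤ (n:ℝ) := by exact_mod_cast h2
  have hθpos : 0 < θ := by
    apply div_pos _ hden
    nlinarith [Real.pi_pos]
  have hθlt : θ < Real.pi := by
    rw [hθ, div_lt_iff₀ hden]
    nlinarith [Real.pi_pos]
  set t : ℝ := Real.pi - θ with ht
  have hcos : -(2*Real.cos θ) = 2 * Real.cos t := by rw [ht, Real.cos_pi_sub]; ring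
  have hsin : Real.sin t ≠ 0 := by
    rw [ht, Real.sin_pi_sub]
    exact ne_of_gt (Real.sin_pos_of_pos_of_lt_pi hθpos hθlt)
  rw [hcos, ocq_eval, show (2:ℝ) * Real.cos t / 2 = Real.cos t by ring]
  have u1 := Polynomial.Chebyshev.U_real_cos t n
  have u2 := Polynomial.Chebyshev.U_real_cos t ((n:ℤ)-1)
  push_cast at u1 u2
  set A : ℝ := ((2*(n:ℝ)+1)) * t / 2 with hA
  have hθeq : (2*(n:ℝ)+1) * θ = 2 * Real.pi * (j:ℝ) := by
    rw [hθ]; field_simp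
  have hAeq : A = Real.pi/2 + ((n:ℝ) - (j:ℝ)) * Real.pi := by
    rw [hA, ht]; nlinarith [hθeq]
  have hcosA : Real.cos A = 0 := by
    rw [hAeq, Real.cos_add]
    have : Real.sin (((n:ℝ) - (j:ℝ)) * Real.pi) = 0 := by
      have := Real.sin_int_mul_pi ((n:ℤ) - (j:ℤ))
      push_cast at this
      exact this
    simp [this]
  have hang1 : ((n:ℝ)+1) * t = A + t/2 := by rw [hA]; ring
  have hang2 : ((n:ℝ)-1+1) * t = A - t/2 := by rw [hA]; ring
  have key : ((Polynomial.Chebyshev.U ℝ (n:ℤ)).eval (Real.cos t) -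
      (Polynomial.Chebyshev.U ℝ ((n:ℤ)-1)).eval (Real.cos t)) * Real.sin t = 0 := by
    rw [sub_mul, u1, u2, hang1, hang2, Real.sin_add, Real.sin_sub, hcosA]
    ring
  rcases mul_eq_zero.mp key with h | h
  · linarith [h]
  · exact absurd h hsin


lemma eq_prod_of_monic_of_roots (p : ℝ[X]) (hp : p.Monic) (s : Finset ℝ)
    (hdeg : p.natDegree = s.card) (hroots : ∀ a ∈ s, p.eval a = 0) :
    p = ∏ a ∈ s, (X - C a) := by
  have hp0 : p ≠ 0 := hp.ne_zero
  have hle : s.val ≤ p.roots := by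
    rw [Multiset.le_iff_count]
    intro a
    by_cases ha : a ∈ s
    · have h1 : s.val.count a = 1 := Multiset.count_eq_one_of_mem s.nodup ha
      have h2 : a ∈ p.roots := by
        rw [Polynomial.mem_roots hp0]
        exact hroots a ha
      rw [h1]
      exact Multiset.one_le_count_iff_mem.mpr h2
    · simp [Multiset.count_eq_zero_of_notMem, ha]
  have hdvd : (∏ a ∈ s, (X - C a)) ∣ p := by
    have h1 : (s.val.map fun a => X - C a).prod ∣ (p.roots.map fun a => X - C a).prod :=
      Multiset.prod_dvd_prod_of_le (Multiset.map_le_map hle)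
    exact dvd_trans h1 (prod_multiset_X_sub_C_dvd p)
  obtain ⟨c, hc⟩ := hdvd
  have hGm : (∏ a ∈ s, (X - C a)).Monic := monic_prod_of_monic _ _ fun a _ => monic_X_sub_C a
  have hGd : (∏ a ∈ s, (X - C a)).natDegree = s.card := by
    rw [natDegree_prod _ _ fun a _ => X_sub_C_ne_zero a]
    simp
  have hcne : c ≠ 0 := by rintro rfl; simp [hc] at hp0
  have hcd : c.natDegree = 0 := by
    have := natDegree_mul hGm.ne_zero hcne
    rw [← hc, hdeg, hGd] at this
    omega
  have hc1 : c = 1 := by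
    have hl : p.leadingCoeff = (∏ a ∈ s, (X - C a)).leadingCoeff * c.leadingCoeff := by
      rw [hc, leadingCoeff_mul]
    rw [hp.leadingCoeff, hGm.leadingCoeff, one_mul] at hl
    have : c.coeff 0 = 1 := by
      rw [← hl.symm]
      simp [Polynomial.leadingCoeff, hcd]
    rw [Polynomial.eq_C_of_natDegree_eq_zero hcd, this, map_one]
  rw [hc, hc1, mul_one]

lemma charpoly_eval {n : ℕ} (M : Matrix (Fin n) (Fin n) ℝ) (x : ℝ) :
    M.charpoly.eval x = (x • (1 : Matrix (Fin n) (Fin n) ℝ) - M).det := by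
  rw [Matrix.charpoly, ← Polynomial.coe_evalRingHom, RingHom.map_det]
  congr 1
  ext i j
  by_cases h : i = j <;>
    simp [Matrix.charmatrix_apply, Matrix.one_apply, Matrix.diagonal_apply, h, mul_comm]


lemma eigen_det (n : ℕ) (hn : 1 ≤ n) (F : Matrix (Fin n) (Fin n) ℝ)
    (hF : ∀ i j : Fin n, F i j =
      if i = j then (if (i : ℕ) = 0 then -1 else 0)
      else if (i : ℕ) + 1 = (j : ℕ) ∨ (j : ℕ) + 1 = (i : ℕ) then 1 else 0)
    (j : ℕ) (h1 : 1 ≤ j) (h2 : j ≤ n) :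
    (F - (2 * Real.cos (2*Real.pi*(j:ℝ)/(2*(n:ℝ)+1))) • (1 : Matrix (Fin n) (Fin n) ℝ)).det = 0 := by
  set θ : ℝ := 2*Real.pi*(j:ℝ)/(2*(n:ℝ)+1) with hθ
  set μ : ℝ := 2 * Real.cos θ with hμ
  have hden : (0:ℝ) < 2*(n:ℝ)+1 := by positivity
  have hj : (1:ℝ) ≤ (j:ℝ) := by exact_mod_cast h1
  have hjn : (j:ℝ) ≤ (n:ℝ) := by exact_mod_cast h2
  have hθpos : 0 < θ := by
    apply div_pos _ hden
    nlinarith [Real.pi_pos]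
  have hθlt : θ < Real.pi := by
    rw [hθ, div_lt_iff₀ hden]
    nlinarith [Real.pi_pos]
  set V : ℕ → ℝ := fun k => Real.sin ((2*(k:ℝ)+1)*θ/2) with hV
  have hVn : V n = 0 := by
    have harg : (2*(n:ℝ)+1)*θ/2 = (j:ℝ) * Real.pi := by
      rw [hθ]; field_simp
    show Real.sin ((2*(n:ℝ)+1)*θ/2) = 0
    rw [harg]
    have := Real.sin_int_mul_pi (j:ℤ)
    push_cast at this
    exact this
  have hV0 : 0 < V 0 := by
    show 0 < Real.sin ((2*((0:ℕ):ℝ)+1)*θ/2)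
    rw [show (2*((0:ℕ):ℝ)+1)*θ/2 = θ/2 by push_cast; ring]
    exact Real.sin_pos_of_pos_of_lt_pi (by linarith) (by linarith [Real.pi_pos])
  have trig : ∀ b : ℝ, Real.sin (b - θ) + Real.sin (b + θ) = μ * Real.sin b := by
    intro b
    rw [Real.sin_sub, Real.sin_add, hμ]
    ring
  set v : Fin n → ℝ := fun i => V (i:ℕ) with hv
  -- row sums
  have hrow : ∀ i : Fin n, (∑ jj : Fin n, F i jj * V (jj:ℕ)) =
      (if (i:ℕ) = 0 then -(V 0) else V ((i:ℕ)-1)) + V ((i:ℕ)+1) := by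
    intro i
    have hsplit : ∀ jj : Fin n, F i jj * V (jj:ℕ) =
        (if i = jj then (if (i:ℕ)=0 then -(V (i:ℕ)) else 0) else 0)
        + ((if (jj:ℕ) = (i:ℕ)+1 then V (jj:ℕ) else 0)
        + (if (jj:ℕ)+1 = (i:ℕ) then V (jj:ℕ) else 0)) := by
      intro jj
      rw [hF]
      rcases eq_or_ne i jj with rfl | hne
      · rw [if_pos rfl, if_pos rfl, if_neg (by omega : ¬((i:ℕ) = (i:ℕ)+1)),
          if_neg (by omega : ¬((i:ℕ)+1 = (i:ℕ)))]
        split_ifs <;> ring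
      · rw [if_neg hne, if_neg hne]
        rcases eq_or_ne ((i:ℕ)+1) (jj:ℕ) with hA | hA
        · rw [if_pos (Or.inl hA), if_pos hA.symm, if_neg (by omega)]
          ring
        · rcases eq_or_ne ((jj:ℕ)+1) (i:ℕ) with hB | hB
          · rw [if_pos (Or.inr hB), if_neg (by omega), if_pos hB]
            ring
          · rw [if_neg (not_or.mpr ⟨hA, hB⟩), if_neg (by omega), if_neg hB]
            ring
    rw [Finset.sum_congr rfl (fun jj _ => hsplit jj), Finset.sum_add_distrib,
      Finset.sum_add_distrib]
    have S1 : (∑ jj : Fin n, if i = jj then (if (i:ℕ)=0 then -(V (i:ℕ)) else 0) else 0)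
        = (if (i:ℕ)=0 then -(V (i:ℕ)) else 0) := by
      rw [Finset.sum_ite_eq]
      simp
    have S2 : (∑ jj : Fin n, if (jj:ℕ) = (i:ℕ)+1 then V (jj:ℕ) else 0) = V ((i:ℕ)+1) := by
      by_cases h : (i:ℕ)+1 < n
      · rw [Finset.sum_eq_single (⟨(i:ℕ)+1, h⟩ : Fin n)]
        · simp
        · intro b _ hb
          rw [if_neg]
          intro hc
          exact hb (Fin.ext (by simpa using hc))
        · intro hmem
          exact absurd (Finset.mem_univ _) hmem
      · have hin : (i:ℕ)+1 = n := by omega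
        rw [hin, hVn, Finset.sum_eq_zero]
        intro b _
        rw [if_neg (by omega)]
    have S3 : (∑ jj : Fin n, if (jj:ℕ)+1 = (i:ℕ) then V (jj:ℕ) else 0)
        = (if (i:ℕ) = 0 then 0 else V ((i:ℕ)-1)) := by
      by_cases h : (i:ℕ) = 0
      · rw [if_pos h, Finset.sum_eq_zero]
        intro b _
        rw [if_neg (by omega)]
      · rw [if_neg h, Finset.sum_eq_single (⟨(i:ℕ)-1, by omega⟩ : Fin n)]
        · rw [if_pos (by simp; omega)]
        · intro b _ hb
          rw [if_neg]
          intro hc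
          exact hb (Fin.ext (by simp; omega))
        · intro hmem
          exact absurd (Finset.mem_univ _) hmem
    rw [S1, S2, S3]
    by_cases h : (i:ℕ) = 0
    · rw [if_pos h, if_pos h, if_pos h, h]
      ring
    · rw [if_neg h, if_neg h, if_neg h]
      ring
  -- trig identity per row
  have hval : ∀ i : Fin n, (if (i:ℕ) = 0 then -(V 0) else V ((i:ℕ)-1)) + V ((i:ℕ)+1)
      = μ * V (i:ℕ) := by
    intro i
    by_cases h : (i:ℕ) = 0
    · have t1 := trig (θ/2)
      rw [show θ/2 - θ = -(θ/2) by ring, Real.sin_neg] at t1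
      have e0 : V 0 = Real.sin (θ/2) := by
        show Real.sin _ = _
        norm_num
      have e1 : V (0+1) = Real.sin (θ/2 + θ) := by
        show Real.sin ((2*((1:ℕ):ℝ)+1)*θ/2) = _
        rw [show (2*((1:ℕ):ℝ)+1)*θ/2 = θ/2 + θ by push_cast; ring]
      rw [if_pos h, h, e1, e0]
      linarith [t1]
    · set k : ℕ := (i:ℕ) with hk
      have hk1 : 1 ≤ k := by omega
      have t1 := trig ((2*(k:ℝ)+1)*θ/2)
      have em : V (k-1) = Real.sin ((2*(k:ℝ)+1)*θ/2 - θ) := by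
        show Real.sin ((2*((k-1:ℕ):ℝ)+1)*θ/2) = _
        rw [show ((k-1:ℕ):ℝ) = (k:ℝ) - 1 by push_cast [Nat.cast_sub hk1]; ring,
          show (2*((k:ℝ)-1)+1)*θ/2 = (2*(k:ℝ)+1)*θ/2 - θ by ring]
      have ep : V (k+1) = Real.sin ((2*(k:ℝ)+1)*θ/2 + θ) := by
        show Real.sin ((2*((k+1:ℕ):ℝ)+1)*θ/2) = _
        rw [show (2*((k+1:ℕ):ℝ)+1)*θ/2 = (2*(k:ℝ)+1)*θ/2 + θ by push_cast; ring]
      have ek : V k = Real.sin ((2*(k:ℝ)+1)*θ/2) := rfl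
      rw [if_neg h, em, ep, ek]
      exact t1
  -- eigen equation
  have hmulvec : F.mulVec v = μ • v := by
    funext i
    show ∑ jj : Fin n, F i jj * v jj = μ * v i
    calc (∑ jj : Fin n, F i jj * V (jj:ℕ))
        = (if (i:ℕ) = 0 then -(V 0) else V ((i:ℕ)-1)) + V ((i:ℕ)+1) := hrow i
      _ = μ * V (i:ℕ) := hval i
  have hzero : (F - μ • (1 : Matrix (Fin n) (Fin n) ℝ)).mulVec v = 0 := by
    rw [Matrix.sub_mulVec, Matrix.smul_mulVec, Matrix.one_mulVec, hmulvec]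
    simp
  have hvne : v ≠ 0 := by
    intro hcon
    have : v ⟨0, by omega⟩ = 0 := by rw [hcon]; rfl
    rw [hv] at this
    simp only at this
    rw [this] at hV0
    exact lt_irrefl 0 hV0
  exact Matrix.exists_mulVec_eq_zero_iff.mp ⟨v, hvne, hzero⟩


lemma cos_injOn (n : ℕ) : Set.InjOn (fun j : ℕ => 2*Real.cos (2*Real.pi*(j:ℝ)/(2*(n:ℝ)+1)))
    (Finset.Icc 1 n) := by
  intro a ha b hb hab
  simp only [Finset.coe_Icc, Set.mem_Icc] at ha hb
  have hden : (0:ℝ) < 2*(n:ℝ)+1 := by positivity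
  have mem : ∀ c : ℕ, c ≤ n → 2*Real.pi*(c:ℝ)/(2*(n:ℝ)+1) ∈ Set.Icc 0 Real.pi := by
    intro c hc
    constructor
    · positivity
    · rw [div_le_iff₀ hden]
      have : (c:ℝ) ≤ (n:ℝ) := by exact_mod_cast hc
      nlinarith [Real.pi_pos]
  have hcos : Real.cos (2*Real.pi*(a:ℝ)/(2*(n:ℝ)+1)) = Real.cos (2*Real.pi*(b:ℝ)/(2*(n:ℝ)+1)) := by
    simp only at hab
    linarith
  have hθ := Real.injOn_cos (mem a ha.2) (mem b hb.2) hcos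
  rw [div_eq_div_iff hden.ne' hden.ne'] at hθ
  have h2 := mul_right_cancel₀ hden.ne' hθ
  have h3 : (a:ℝ) = (b:ℝ) := by
    have hpi := Real.pi_ne_zero
    field_simp at h2
    exact_mod_cast h2
  exact_mod_cast h3

theorem odd_cycle_finite_component (n : ℕ) (hn : 1 ≤ n)
    (F : Matrix (Fin n) (Fin n) ℝ)
    (hF : ∀ i j : Fin n, F i j =
      if i = j then (if (i : ℕ) = 0 then -1 else 0)
      else if (i : ℕ) + 1 = (j : ℕ) ∨ (j : ℕ) + 1 = (i : ℕ) then 1 else 0) :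
    (∀ x : ℝ, (F + x • (1 : Matrix (Fin n) (Fin n) ℝ)).det =
      (Polynomial.Chebyshev.U ℝ n).eval (x / 2) -
      (Polynomial.Chebyshev.U ℝ (n - 1)).eval (x / 2)) ∧
    {μ : ℝ | F.charpoly.IsRoot μ} =
      {μ : ℝ | ∃ j : ℕ, 1 ≤ j ∧ j ≤ n ∧
        μ = 2 * Real.cos (2 * Real.pi * j / (2 * n + 1))} := by
  set r : ℕ → ℝ := fun j => 2*Real.cos (2*Real.pi*(j:ℝ)/(2*(n:ℝ)+1)) with hr
  have hinj : Set.InjOn r (Finset.Icc 1 n) := cos_injOn n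
  have hinjneg : Set.InjOn (fun j => -(r j)) (Finset.Icc 1 n) := by
    intro a ha b hb hab
    exact hinj ha hb (by simpa using neg_injective hab)
  have hcard : (Finset.Icc 1 n).card = n := by
    rw [Nat.card_Icc]; omega
  -- the negative-eigenvalue finset
  set s : Finset ℝ := (Finset.Icc 1 n).image (fun j => -(r j)) with hs
  have hscard : s.card = n := by
    rw [hs, Finset.card_image_of_injOn hinjneg, hcard]
  have hroot_neg : ∀ a ∈ s, ((-F).charpoly).eval a = 0 := by
    intro a ha
    rw [hs, Finset.mem_image] at ha
    obtain ⟨j, hj, rfl⟩ := ha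
    rw [Finset.mem_Icc] at hj
    rw [charpoly_eval]
    have : (-(r j)) • (1 : Matrix (Fin n) (Fin n) ℝ) - (-F)
        = F - (r j) • (1 : Matrix (Fin n) (Fin n) ℝ) := by
      rw [neg_smul]; abel
    rw [this]
    exact eigen_det n hn F hF j hj.1 hj.2
  have hA : (-F).charpoly = ∏ a ∈ s, (X - C a) :=
    eq_prod_of_monic_of_roots _ ((-F).charpoly_monic) s
      (by rw [Matrix.charpoly_natDegree_eq_dim, Fintype.card_fin, hscard]) hroot_neg
  have hq : ocq n = ∏ a ∈ s, (X - C a) :=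
    eq_prod_of_monic_of_roots _ (ocq_monic_deg n).1 s
      (by rw [(ocq_monic_deg n).2, hscard])
      (by
        intro a ha
        rw [hs, Finset.mem_image] at ha
        obtain ⟨j, hj, rfl⟩ := ha
        rw [Finset.mem_Icc] at hj
        exact ocq_root n j hj.1 hj.2)
  have hAq : (-F).charpoly = ocq n := by rw [hA, hq]
  constructor
  · intro x
    have h1 := charpoly_eval (-F) x
    rw [sub_neg_eq_add, hAq, ocq_eval] at h1
    rw [show F + x • (1 : Matrix (Fin n) (Fin n) ℝ)
        = x • (1 : Matrix (Fin n) (Fin n) ℝ) + F from add_comm _ _, ← h1]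
  · -- eigenvalues of F
    set s2 : Finset ℝ := (Finset.Icc 1 n).image r with hs2
    have hs2card : s2.card = n := by
      rw [hs2, Finset.card_image_of_injOn hinj, hcard]
    have hroot : ∀ a ∈ s2, (F.charpoly).eval a = 0 := by
      intro a ha
      rw [hs2, Finset.mem_image] at ha
      obtain ⟨j, hj, rfl⟩ := ha
      rw [Finset.mem_Icc] at hj
      rw [charpoly_eval]
      have : (r j) • (1 : Matrix (Fin n) (Fin n) ℝ) - F
          = -(F - (r j) • (1 : Matrix (Fin n) (Fin n) ℝ)) := by abel
      rw [this, Matrix.det_neg, eigen_det n hn F hF j hj.1 hj.2, mul_zero]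
    have hB : F.charpoly = ∏ a ∈ s2, (X - C a) :=
      eq_prod_of_monic_of_roots _ (F.charpoly_monic) s2
        (by rw [Matrix.charpoly_natDegree_eq_dim, Fintype.card_fin, hs2card]) hroot
    ext μ
    simp only [Set.mem_setOf_eq, Polynomial.IsRoot, hB, eval_prod, eval_sub, eval_X, eval_C,
      Finset.prod_eq_zero_iff]
    constructor
    · rintro ⟨a, ha, hz⟩
      rw [hs2, Finset.mem_image] at ha
      obtain ⟨j, hj, rfl⟩ := ha
      rw [Finset.mem_Icc] at hj
      exact ⟨j, hj.1, hj.2, by rw [sub_eq_zero.mp hz]⟩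
    · rintro ⟨j, hj1, hj2, rfl⟩
      refine ⟨r j, ?_, by simp [hr]⟩
      rw [hs2, Finset.mem_image]
      exact ⟨j, Finset.mem_Icc.mpr ⟨hj1, hj2⟩, rfl⟩
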